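/- With γ(z) = z²(P̂ₙ - 1) + zĤ - 1: if z ∈ ℂ satisfies |z| = 1, Im(z) ≠ 0, and det γ(z) = 0, then every vector ψ in the null space of γ(z) satisfies ⟨ψ, P̂ₙ ψ⟩ = 0, i.e., P̂ₙψ = 0. -/

import Mathlib

open Matrix

/-- Orthogonal projection onto the first `n` coordinates of `ℂ^(n+m)`. -/
noncomputable def Pn (n m : ℕ) : Matrix (Fin n ⊕ Fin m) (Fin n ⊕ Fin m) ℂ :=
  Matrix.fromBlocks 1 0 0 0

/-- `γ(z) = z²(P̂ₙ - 1) + zĤ - 1`. -/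
noncomputable def gam {n m : ℕ} (H : Matrix (Fin n ⊕ Fin m) (Fin n ⊕ Fin m) ℂ)
    (z : ℂ) : Matrix (Fin n ⊕ Fin m) (Fin n ⊕ Fin m) ℂ :=
  z ^ 2 • (Pn n m - 1) + z • H - 1

lemma Pn_mulVec {n m : ℕ} (ψ : Fin n ⊕ Fin m → ℂ) (x : Fin n ⊕ Fin m) :
    (Pn n m *ᵥ ψ) x = Sum.elim (fun i => ψ (Sum.inl i)) (fun _ => 0) x := by
  cases x with
  | inl i =>
    simp [Pn, Matrix.mulVec, dotProduct, Fintype.sum_sum_type,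
      Matrix.fromBlocks_apply₁₁, Matrix.fromBlocks_apply₁₂, Matrix.one_apply]
  | inr j =>
    simp [Pn, Matrix.mulVec, dotProduct, Fintype.sum_sum_type,
      Matrix.fromBlocks_apply₂₁, Matrix.fromBlocks_apply₂₂]

theorem stmt7 {n m : ℕ} (H : Matrix (Fin n ⊕ Fin m) (Fin n ⊕ Fin m) ℂ)
    (hH : H.IsHermitian) (z : ℂ) (hz : ‖z‖ = 1) (him : z.im ≠ 0)
    (hdet : (gam H z).det = 0)
    (ψ : Fin n ⊕ Fin m → ℂ) (hψ : gam H z *ᵥ ψ = 0) :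
    star ψ ⬝ᵥ (Pn n m *ᵥ ψ) = 0 ∧ Pn n m *ᵥ ψ = 0 := by
  set a : ℂ := star ψ ⬝ᵥ (Pn n m *ᵥ ψ) with ha_def
  set s : ℂ := star ψ ⬝ᵥ ψ with hs_def
  set h : ℂ := star ψ ⬝ᵥ (H *ᵥ ψ) with hh_def
  -- a as a sum of norms
  have ha_formula : a = ∑ i : Fin n, (Complex.normSq (ψ (Sum.inl i)) : ℂ) := by
    rw [ha_def]
    simp only [dotProduct, Fintype.sum_sum_type, Pn_mulVec]
    simp [Complex.normSq_eq_conj_mul_self]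
  -- real-ness
  have ha_conj : (starRingEnd ℂ) a = a := by
    rw [ha_formula]; simp
  have hs_conj : (starRingEnd ℂ) s = s := by
    rw [hs_def]
    simp [dotProduct, Fintype.sum_sum_type, Complex.mul_conj, Complex.conj_mul',
      ← Complex.normSq_eq_conj_mul_self, mul_comm]
  have hh_conj : (starRingEnd ℂ) h = h := by
    have : star h = star (H *ᵥ ψ) ⬝ᵥ ψ := by
      rw [hh_def, ← Matrix.star_dotProduct_star]; simp
    rw [Matrix.star_mulVec, ← Matrix.dotProduct_mulVec, hH.eq] at this
    simpa [hh_def] using this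
  -- the key scalar equation
  have E : z ^ 2 * (a - s) + z * h - s = 0 := by
    have h0 : star ψ ⬝ᵥ (gam H z *ᵥ ψ) = 0 := by rw [hψ]; simp
    rw [gam] at h0
    simp only [Matrix.add_mulVec, Matrix.sub_mulVec, Matrix.smul_mulVec,
      Matrix.one_mulVec, dotProduct_add, dotProduct_sub,
      dotProduct_smul, smul_eq_mul] at h0
    rw [← ha_def, ← hs_def, ← hh_def] at h0
    linear_combination h0
  have E' : (starRingEnd ℂ) z ^ 2 * (a - s) + (starRingEnd ℂ) z * h - s = 0 := by
    have := congrArg (starRingEnd ℂ) E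
    simpa [map_sub, map_add, map_pow, ha_conj, hs_conj, hh_conj] using this
  have hzz : z * (starRingEnd ℂ) z = 1 := by
    rw [Complex.mul_conj]
    norm_cast
    rw [Complex.normSq_eq_norm_sq, hz]; norm_num
  have hzne : z - (starRingEnd ℂ) z ≠ 0 := by
    intro hc
    exact him (Complex.conj_eq_iff_im.mp (sub_eq_zero.mp hc).symm)
  have haz : (z - (starRingEnd ℂ) z) * a = 0 := by
    linear_combination (starRingEnd ℂ) z * E - z * E' - (z - (starRingEnd ℂ) z) * (a - s) * hzz
  have ha0 : a = 0 := by
    rcases mul_eq_zero.mp haz with h1 | h1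
    · exact absurd h1 hzne
    · exact h1
  refine ⟨ha0, ?_⟩
  -- each component vanishes
  have hcomp : ∀ i : Fin n, ψ (Sum.inl i) = 0 := by
    have hsum : ∑ i : Fin n, Complex.normSq (ψ (Sum.inl i)) = 0 := by
      have h2 : (∑ i : Fin n, (Complex.normSq (ψ (Sum.inl i)) : ℂ)) = 0 :=
        ha_formula.symm.trans ha0
      exact_mod_cast h2
    intro i
    have := (Finset.sum_eq_zero_iff_of_nonneg (fun i _ => Complex.normSq_nonneg _)).mp hsum i (Finset.mem_univ i)
    exact Complex.normSq_eq_zero.mp this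
  funext x
  rw [Pn_mulVec]
  cases x with
  | inl i => simp [hcomp i]
  | inr j => simp
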